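/- Let (X₁, X₂) be jointly Gaussian with means μ₁, μ₂, variances ν₁₁, ν₂₂ > 0 and covariance ν₁₂. Then E[φ(X₁)Φ(X₂)] = (1/√(1+ν₁₁)) · φ(μ₁/√(1+ν₁₁)) · Φ((μ₂/√(1+ν₂₂) - ρ·μ₁/√(1+ν₁₁))/√(1-ρ²)), where ρ = ν₁₂/√((1+ν₁₁)(1+ν₂₂)). -/

import Mathlib

open MeasureTheory ProbabilityTheory Real
open scoped NNReal

noncomputable def npdf (x : ℝ) : ℝ := (Real.sqrt (2 * Real.pi))⁻¹ * Real.exp (-(x ^ 2) / 2)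

noncomputable def ncdf (x : ℝ) : ℝ := ∫ t in Set.Iic x, npdf t

noncomputable def P2 : Measure (ℝ × ℝ) :=
  (ProbabilityTheory.gaussianReal 0 1).prod (ProbabilityTheory.gaussianReal 0 1)

lemma npdf_eq : npdf = gaussianPDFReal 0 1 := by
  funext x
  simp [npdf, gaussianPDFReal]

lemma npdf_nonneg (x : ℝ) : 0 ≤ npdf x := by unfold npdf; positivity

lemma npdf_le (x : ℝ) : npdf x ≤ (Real.sqrt (2 * Real.pi))⁻¹ := by
  have h : Real.exp (-(x ^ 2) / 2) ≤ 1 := by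
    rw [Real.exp_le_one_iff]; nlinarith [sq_nonneg x]
  have h2 : (0:ℝ) ≤ (Real.sqrt (2 * Real.pi))⁻¹ := by positivity
  calc npdf x ≤ (Real.sqrt (2 * Real.pi))⁻¹ * 1 := mul_le_mul_of_nonneg_left h h2
  _ = _ := mul_one _

lemma continuous_npdf : Continuous npdf := by
  unfold npdf; continuity

lemma measurable_npdf : Measurable npdf := continuous_npdf.measurable

lemma integrable_npdf : Integrable npdf := by
  rw [npdf_eq]; exact integrable_gaussianPDFReal 0 1

lemma integral_npdf : ∫ x, npdf x = 1 := by
  rw [npdf_eq]; exact integral_gaussianPDFReal_eq_one 0 one_ne_zero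

lemma ncdf_nonneg (x : ℝ) : 0 ≤ ncdf x :=
  setIntegral_nonneg measurableSet_Iic (fun t _ => npdf_nonneg t)

lemma ncdf_le_one (x : ℝ) : ncdf x ≤ 1 := by
  rw [← integral_npdf]
  exact setIntegral_le_integral integrable_npdf (Filter.Eventually.of_forall npdf_nonneg)

lemma monotone_ncdf : Monotone ncdf := by
  intro x y h
  exact setIntegral_mono_set integrable_npdf.integrableOn
    (Filter.Eventually.of_forall npdf_nonneg)
    (HasSubset.Subset.eventuallyLE (Set.Iic_subset_Iic.mpr h))

lemma measurable_ncdf : Measurable ncdf := monotone_ncdf.measurable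

/-- completion of the square -/
lemma npdf_mul_npdf (μ c x : ℝ) :
    npdf (μ + c * x) * npdf x
      = npdf (μ / Real.sqrt (1 + c ^ 2)) *
        npdf (Real.sqrt (1 + c ^ 2) * x + c * μ / Real.sqrt (1 + c ^ 2)) := by
  set s := Real.sqrt (1 + c ^ 2) with hs_def
  have hs0 : 0 < s := Real.sqrt_pos.mpr (by positivity)
  have hs2 : s ^ 2 = 1 + c ^ 2 := Real.sq_sqrt (by positivity)
  obtain ⟨u, rfl⟩ : ∃ u, μ = s * u := ⟨μ / s, by field_simp⟩
  unfold npdf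
  rw [mul_mul_mul_comm, ← Real.exp_add, mul_mul_mul_comm, ← Real.exp_add]
  congr 1
  have h1 : s * u / s = u := by field_simp
  rw [h1]
  have h2 : c * (s * u) / s = c * u := by field_simp
  rw [h2]
  rw [Real.exp_eq_exp]
  field_simp
  linear_combination (x ^ 2 - u ^ 2) * hs2

/-- integral of a translated/scaled gaussian -/
lemma integral_npdf_affine {α : ℝ} (hα : 0 < α) (β : ℝ) :
    ∫ x, npdf (α * x + β) = α⁻¹ := by
  have h := MeasureTheory.Measure.integral_comp_mul_left (fun u => npdf (u + β)) α
  simp only [smul_eq_mul] at h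
  rw [h, integral_add_right_eq_self npdf β, integral_npdf, mul_one,
    abs_of_pos (inv_pos.mpr hα)]

lemma ncdf_eq_shift (p r : ℝ) : ncdf (p + r) = ∫ u in Set.Iic p, npdf (u + r) := by
  have key : ∀ u : ℝ, Set.indicator (Set.Iic p) (fun u => npdf (u + r)) u
      = Set.indicator (Set.Iic (p + r)) npdf (u + r) := by
    intro u
    by_cases h : u ≤ p
    · rw [Set.indicator_of_mem (Set.mem_Iic.mpr h),
        Set.indicator_of_mem (Set.mem_Iic.mpr (by linarith))]
    · rw [Set.indicator_of_notMem (by simpa using h), Set.indicator_of_notMem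
        (by simp only [Set.mem_Iic, not_le] at h ⊢; linarith)]
  calc ncdf (p + r) = ∫ t, Set.indicator (Set.Iic (p + r)) npdf t := by
        rw [ncdf, integral_indicator measurableSet_Iic]
    _ = ∫ u, Set.indicator (Set.Iic (p + r)) npdf (u + r) :=
        (integral_add_right_eq_self _ r).symm
    _ = ∫ u, Set.indicator (Set.Iic p) (fun u => npdf (u + r)) u := by
        congr 1; funext u; exact (key u).symm
    _ = ∫ u in Set.Iic p, npdf (u + r) := integral_indicator measurableSet_Iic

lemma integrable_npdf_shift (r : ℝ) : Integrable (fun u : ℝ => npdf (u + r)) :=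
  integrable_npdf.comp_add_right r

lemma setIntegral_npdf_shift_le (p r : ℝ) : ∫ u in Set.Iic p, npdf (u + r) ≤ 1 := by
  rw [← ncdf_eq_shift, ncdf, ← integral_npdf]
  exact setIntegral_le_integral integrable_npdf (Filter.Eventually.of_forall npdf_nonneg)

/-- Key lemma A -/
lemma integral_ncdf_mul_npdf (p q : ℝ) :
    ∫ y, ncdf (p + q * y) * npdf y = ncdf (p / Real.sqrt (1 + q ^ 2)) := by
  set s := Real.sqrt (1 + q ^ 2) with hs_def
  have hs0 : 0 < s := Real.sqrt_pos.mpr (by positivity)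
  -- the double-integral function
  set H : ℝ → ℝ → ℝ := fun y u => npdf (u + q * y) * npdf y with hH
  have hmeas : AEStronglyMeasurable (Function.uncurry H)
      (volume.prod (volume.restrict (Set.Iic p))) := by
    apply Continuous.aestronglyMeasurable
    exact ((continuous_npdf.comp ((continuous_snd).add
      ((continuous_const.mul continuous_fst)))).mul
      (continuous_npdf.comp continuous_fst))
  have hint : Integrable (Function.uncurry H) (volume.prod (volume.restrict (Set.Iic p))) := by
    rw [integrable_prod_iff hmeas]
    constructor
    · refine Filter.Eventually.of_forall fun y => ?_
      exact (((integrable_npdf_shift (q * y)).mul_const (npdf y)).restrict)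
    · have hb : ∀ y : ℝ, (∫ u in Set.Iic p, ‖H y u‖) ≤ npdf y := by
        intro y
        have : ∀ u, ‖H y u‖ = npdf (u + q * y) * npdf y :=
          fun u => abs_of_nonneg (mul_nonneg (npdf_nonneg _) (npdf_nonneg _))
        simp_rw [this]
        rw [integral_mul_const]
        calc (∫ u in Set.Iic p, npdf (u + q * y)) * npdf y
            ≤ 1 * npdf y := by
              apply mul_le_mul_of_nonneg_right (setIntegral_npdf_shift_le p (q * y))
                (npdf_nonneg y)
          _ = npdf y := one_mul _
      apply Integrable.mono' integrable_npdf
        (hmeas.norm.integral_prod_right')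
      refine Filter.Eventually.of_forall fun y => ?_
      rw [Real.norm_eq_abs, abs_of_nonneg (integral_nonneg fun u => norm_nonneg _)]
      exact hb y
  -- inner gaussian-product integral
  have hinner : ∀ u : ℝ, (∫ y, npdf (u + q * y) * npdf y) = npdf (u / s) * s⁻¹ := by
    intro u
    simp_rw [npdf_mul_npdf u q]
    rw [integral_const_mul, integral_npdf_affine hs0]
  calc ∫ y, ncdf (p + q * y) * npdf y
      = ∫ y, ∫ u in Set.Iic p, H y u := by
        congr 1; funext y
        rw [ncdf_eq_shift p (q * y), ← integral_mul_const]
    _ = ∫ u in Set.Iic p, ∫ y, H y u := integral_integral_swap hint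
    _ = ∫ u in Set.Iic p, npdf (u / s) * s⁻¹ := by
        apply setIntegral_congr_fun measurableSet_Iic
        intro u _
        exact hinner u
    _ = ncdf (p / s) := by
        simp_rw [div_eq_inv_mul]
        have hmap : Measure.map (fun u : ℝ => s⁻¹ * u) volume
            = ENNReal.ofReal |(s⁻¹)⁻¹| • volume :=
          Real.map_volume_mul_left (inv_ne_zero hs0.ne')
        have hpre : (fun u : ℝ => s⁻¹ * u) ⁻¹' Set.Iic (s⁻¹ * p) = Set.Iic p := by
          ext u
          simp only [Set.mem_preimage, Set.mem_Iic]
          exact mul_le_mul_iff_right₀ (inv_pos.mpr hs0)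
        have h2 : ∫ t in Set.Iic (s⁻¹ * p), npdf t ∂(Measure.map (fun u : ℝ => s⁻¹ * u) volume)
            = ∫ u in Set.Iic p, npdf (s⁻¹ * u) := by
          rw [setIntegral_map measurableSet_Iic
            (by rw [hmap]; exact continuous_npdf.aestronglyMeasurable)
            ((measurable_const_mul s⁻¹).aemeasurable), hpre]
        rw [hmap] at h2
        rw [Measure.restrict_smul, integral_smul_measure, ENNReal.toReal_ofReal
          (abs_nonneg _), inv_inv, abs_of_pos hs0] at h2
        rw [integral_mul_const, ← h2, smul_eq_mul, ncdf]
        field_simp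

lemma integral_gaussianReal_eq (g : ℝ → ℝ) :
    ∫ x, g x ∂(gaussianReal 0 1) = ∫ x, npdf x * g x := by
  rw [gaussianReal_of_var_ne_zero 0 one_ne_zero]
  have hpdf : gaussianPDF 0 1 = fun x => (Real.toNNReal (npdf x) : ENNReal) := by
    funext x
    rw [gaussianPDF, ← npdf_eq]
    rfl
  rw [hpdf, integral_withDensity_eq_integral_smul measurable_npdf.real_toNNReal g]
  congr 1; funext x
  rw [NNReal.smul_def, smul_eq_mul, Real.coe_toNNReal _ (npdf_nonneg x)]

lemma integral_npdf_affine_mul_ncdf {α : ℝ} (hα : 0 < α) (β P Q : ℝ) :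
    ∫ x, npdf (α * x + β) * ncdf (P + Q * x)
      = α⁻¹ * ncdf ((P - (Q / α) * β) / Real.sqrt (1 + (Q / α) ^ 2)) := by
  set g : ℝ → ℝ := fun u => npdf (u + β) * ncdf (P + (Q / α) * u) with hg_def
  have hg : ∀ x, npdf (α * x + β) * ncdf (P + Q * x) = g (α * x) := by
    intro x
    have : P + Q / α * (α * x) = P + Q * x := by field_simp
    simp only [hg_def, this]
  simp_rw [hg]
  rw [MeasureTheory.Measure.integral_comp_mul_left g α]
  set f : ℝ → ℝ := fun v => npdf v * ncdf ((P - (Q / α) * β) + (Q / α) * v) with hf_def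
  have hgf : ∀ u, g u = f (u + β) := by
    intro u
    simp only [hg_def, hf_def]
    congr 2
    ring
  simp_rw [hgf]
  rw [integral_add_right_eq_self f β]
  have : ∫ v, f v = ncdf ((P - (Q / α) * β) / Real.sqrt (1 + (Q / α) ^ 2)) := by
    rw [hf_def]
    simp_rw [mul_comm (npdf _) (ncdf _)]
    exact integral_ncdf_mul_npdf _ _
  rw [this, smul_eq_mul, abs_of_pos (inv_pos.mpr hα)]

theorem gaussian_expectation_npdf_mul_ncdf (μ₁ μ₂ ν₁₁ ν₂₂ ν₁₂ a b c ρ : ℝ)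
    (h11 : ν₁₁ = a ^ 2) (h22 : ν₂₂ = b ^ 2 + c ^ 2) (h12 : ν₁₂ = a * b)
    (hp1 : 0 < ν₁₁) (hp2 : 0 < ν₂₂)
    (hρ : ρ = ν₁₂ / Real.sqrt ((1 + ν₁₁) * (1 + ν₂₂))) :
    ∫ w : ℝ × ℝ, npdf (μ₁ + a * w.1) * ncdf (μ₂ + b * w.1 + c * w.2) ∂P2
      = (Real.sqrt (1 + ν₁₁))⁻¹ * npdf (μ₁ / Real.sqrt (1 + ν₁₁)) *
          ncdf ((μ₂ / Real.sqrt (1 + ν₂₂) - ρ * (μ₁ / Real.sqrt (1 + ν₁₁))) /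
            Real.sqrt (1 - ρ ^ 2)) := by
  set s := Real.sqrt (1 + a ^ 2) with hs_def
  set t := Real.sqrt (1 + c ^ 2) with ht_def
  have hs0 : 0 < s := Real.sqrt_pos.mpr (by positivity)
  have ht0 : 0 < t := Real.sqrt_pos.mpr (by positivity)
  have hF : Integrable (fun w : ℝ × ℝ =>
      npdf (μ₁ + a * w.1) * ncdf (μ₂ + b * w.1 + c * w.2)) P2 := by
    have hmeas : AEStronglyMeasurable (fun w : ℝ × ℝ =>
        npdf (μ₁ + a * w.1) * ncdf (μ₂ + b * w.1 + c * w.2)) P2 := by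
      apply Measurable.aestronglyMeasurable
      exact ((measurable_npdf.comp ((measurable_const.add
        (measurable_fst.const_mul a))))).mul
        (measurable_ncdf.comp (((measurable_const.add
          (measurable_fst.const_mul b)).add (measurable_snd.const_mul c))))
    have : IsProbabilityMeasure P2 := by
      rw [P2]; infer_instance
    refine Integrable.mono' (integrable_const ((Real.sqrt (2 * Real.pi))⁻¹)) hmeas ?_
    refine Filter.Eventually.of_forall fun w => ?_
    rw [Real.norm_eq_abs, abs_of_nonneg (mul_nonneg (npdf_nonneg _) (ncdf_nonneg _))]
    calc npdf (μ₁ + a * w.1) * ncdf (μ₂ + b * w.1 + c * w.2)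
        ≤ (Real.sqrt (2 * Real.pi))⁻¹ * 1 :=
          mul_le_mul (npdf_le _) (ncdf_le_one _) (ncdf_nonneg _) (by positivity)
      _ = _ := mul_one _
  rw [P2, integral_prod _ hF]
  have hinner : ∀ x : ℝ, (∫ y, npdf (μ₁ + a * x) * ncdf (μ₂ + b * x + c * y)
      ∂(gaussianReal 0 1)) = npdf (μ₁ + a * x) * ncdf ((μ₂ + b * x) / t) := by
    intro x
    rw [integral_const_mul, integral_gaussianReal_eq]
    congr 1
    simp_rw [mul_comm (npdf _) (ncdf _)]
    exact integral_ncdf_mul_npdf (μ₂ + b * x) c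
  simp_rw [hinner]
  rw [integral_gaussianReal_eq]
  have hre : ∀ x : ℝ, npdf x * (npdf (μ₁ + a * x) * ncdf ((μ₂ + b * x) / t))
      = npdf (μ₁ / s) * (npdf (s * x + a * μ₁ / s) * ncdf (μ₂ / t + (b / t) * x)) := by
    intro x
    have h1 : npdf (μ₁ + a * x) * npdf x = npdf (μ₁ / s) * npdf (s * x + a * μ₁ / s) :=
      npdf_mul_npdf μ₁ a x
    have h2 : (μ₂ + b * x) / t = μ₂ / t + (b / t) * x := by rw [add_div]; ring
    rw [h2, ← mul_assoc, mul_comm (npdf x), h1]; ring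
  simp_rw [hre]
  rw [integral_const_mul, integral_npdf_affine_mul_ncdf hs0 (a * μ₁ / s) (μ₂ / t) (b / t)]
  -- final algebra
  subst h11 h22 h12 hρ
  clear_value s t
  obtain ⟨W, hW0, hW2, hWdef⟩ :
      ∃ W : ℝ, 0 < W ∧ W ^ 2 = 1 + (b ^ 2 + c ^ 2) ∧
        Real.sqrt (1 + (b ^ 2 + c ^ 2)) = W :=
    ⟨Real.sqrt (1 + (b ^ 2 + c ^ 2)), Real.sqrt_pos.mpr (by positivity),
      Real.sq_sqrt (by positivity), rfl⟩
  have hsW : Real.sqrt ((1 + a ^ 2) * (1 + (b ^ 2 + c ^ 2))) = s * W := by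
    rw [Real.sqrt_mul (by positivity), hWdef, ← hs_def]
  rw [← hs_def, hWdef, hsW]
  obtain ⟨D, hD0, hD2⟩ : ∃ D : ℝ, 0 < D ∧ D ^ 2 = s ^ 2 * t ^ 2 + b ^ 2 :=
    ⟨Real.sqrt (s ^ 2 * t ^ 2 + b ^ 2),
      Real.sqrt_pos.mpr (by nlinarith [pow_pos hs0 2, pow_pos ht0 2, sq_nonneg b]),
      Real.sq_sqrt (by nlinarith [pow_pos hs0 2, pow_pos ht0 2, sq_nonneg b])⟩
  have hs2 : s ^ 2 = 1 + a ^ 2 := by rw [hs_def]; exact Real.sq_sqrt (by positivity)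
  have ht2 : t ^ 2 = 1 + c ^ 2 := by rw [ht_def]; exact Real.sq_sqrt (by positivity)
  have key : s ^ 2 * W ^ 2 - a ^ 2 * b ^ 2 = D ^ 2 := by
    rw [hD2, hs2, hW2, ht2]; ring
  have key2 : (t * s) ^ 2 + b ^ 2 = D ^ 2 := by rw [hD2]; ring
  have hsW0 : (0:ℝ) < s * W := mul_pos hs0 hW0
  have hts0 : (0:ℝ) < t * s := mul_pos ht0 hs0
  have h1 : Real.sqrt (1 - (a * b / (s * W)) ^ 2) = D / (s * W) := by
    have e : 1 - (a * b / (s * W)) ^ 2 = (D / (s * W)) ^ 2 := by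
      rw [div_pow, div_pow, eq_div_iff (pow_ne_zero 2 hsW0.ne'), sub_mul,
        div_mul_cancel₀ _ (pow_ne_zero 2 hsW0.ne'), ← key]
      ring
    rw [e, Real.sqrt_sq (div_pos hD0 hsW0).le]
  have h2 : Real.sqrt (1 + (b / t / s) ^ 2) = D / (t * s) := by
    have e : 1 + (b / t / s) ^ 2 = (D / (t * s)) ^ 2 := by
      rw [div_div, div_pow, div_pow, eq_div_iff (pow_ne_zero 2 hts0.ne'), add_mul,
        one_mul, div_mul_cancel₀ _ (pow_ne_zero 2 hts0.ne'), ← key2]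
    rw [e, Real.sqrt_sq (div_pos hD0 hts0).le]
  rw [h1, h2]
  have harg : (μ₂ / t - b / t / s * (a * μ₁ / s)) / (D / (t * s))
      = (μ₂ / W - a * b / (s * W) * (μ₁ / s)) / (D / (s * W)) := by
    field_simp
  rw [harg]
  ring
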